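/- Let H₁ and H₂ be real Hilbert spaces. For i = 1, 2, let C_i be a nonempty closed convex subset of H_i with metric projection P_{C_i}. Let f_i : H_i → H_i be α_i-strongly monotone with respect to g_i and β_i-Lipschitz continuous, and let g_i : H_i → H_i be δ_i-Lipschitz continuous with g_i − I_i σ_i-strongly monotone (I_i the identity on H_i). Let A : H₁ → H₂ be a bounded linear operator with adjoint A*. Suppose x₁* ∈ H₁ is a solution of the split general variational inequality problem, i.e. g₁(x₁*) ∈ C₁, ⟨f₁(x₁*), x − g₁(x₁*)⟩ ≥ 0 for all x ∈ C₁, and x₂* = Ax₁* satisfies g₂(x₂*) ∈ C₂, ⟨f₂(x₂*), x − g₂(x₂*)⟩ ≥ 0 for all x ∈ C₂. Let {αⁿ} ⊆ (0,1) with Σ_{n=1}^∞ αⁿ = +∞, and let sequences {x₁ⁿ}, {yⁿ}, {zⁿ} be generated from any x₁⁰ ∈ H₁ by: g₁(yⁿ) = P_{C₁}(g₁(x₁ⁿ) − ρ₁ f₁(x₁ⁿ)), g₂(zⁿ) = P_{C₂}(g₂(Ayⁿ) − ρ₂ f₂(Ayⁿ)), x₁^{n+1} = (1 − αⁿ)x₁ⁿ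 + αⁿ[yⁿ + γA*(zⁿ − Ayⁿ)]. If the parameters satisfy: ρ₂ > 0, γ ∈ (0, 2/‖A‖²), θ₂ := √((δ₂² − 2ρ₂α₂ + ρ₂²β₂²)/(2σ₂+1)) > 0, k₁ := √(2σ₁+1)/(1 + 2θ₂), δ₁ > |k₁|, α₁ > β₁√(δ₁² − k₁²), and |ρ₁ − α₁/β₁²| < √(α₁² − β₁²(δ₁² − k₁²))/β₁², then the sequence {x₁ⁿ} converges strongly to x₁*. -/

import Mathlib

open Filter RealInnerProductSpace

private lemma sqle {a b : ℝ} (ha : 0 ≤ a) (hb : 0 ≤ b) (h : a ^ 2 ≤ b ^ 2) : a ≤ b := by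
  nlinarith

section aux
variable {H : Type*} [NormedAddCommGroup H] [InnerProductSpace ℝ H]

private lemma proj_fixed {C : Set H} (P : H → H)
    (hmem : ∀ z, P z ∈ C)
    (hchar : ∀ z, ∀ y ∈ C, ⟪z - P z, y - P z⟫ ≤ 0)
    {w c : H} (hc : c ∈ C) (h : ∀ y ∈ C, ⟪w - c, y - c⟫ ≤ 0) : P w = c := by
  have h1 := hchar w c hc
  have h2 := h (P w) (hmem w)
  have key : ⟪w - P w, c - P w⟫ + ⟪w - c, P w - c⟫ = ‖c - P w‖ ^ 2 := by
    rw [← real_inner_self_eq_norm_sq]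
    simp only [inner_sub_left, inner_sub_right]
    ring
  have hn : ‖c - P w‖ = 0 := by nlinarith [norm_nonneg (c - P w)]
  have := norm_eq_zero.mp hn
  rw [sub_eq_zero] at this
  exact this.symm

private lemma proj_nonexp {C : Set H} (P : H → H)
    (hmem : ∀ z, P z ∈ C)
    (hchar : ∀ z, ∀ y ∈ C, ⟪z - P z, y - P z⟫ ≤ 0)
    (u v : H) : ‖P u - P v‖ ≤ ‖u - v‖ := by
  have e1 := hchar u (P v) (hmem v)
  have e2 := hchar v (P u) (hmem u)
  have key : ‖P u - P v‖ ^ 2 ≤ ⟪u - v, P u - P v⟫ := by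
    simp only [inner_sub_left, inner_sub_right] at e1 e2 ⊢
    have c1 := real_inner_comm (P u) (P v)
    rw [← real_inner_self_eq_norm_sq]
    simp only [inner_sub_left, inner_sub_right]
    linarith
  rcases (norm_nonneg (P u - P v)).eq_or_lt with h0 | h0
  · rw [← h0]; exact norm_nonneg _
  · have hcs := (real_inner_le_norm (u - v) (P u - P v))
    nlinarith

private lemma exp_est (g : H → H) (σ : ℝ)
    (hsm : ∀ x x' : H, ⟪(g x - x) - (g x' - x'), x - x'⟫ ≥ σ * ‖x - x'‖ ^ 2)
    (x x' : H) : (2 * σ + 1) * ‖x - x'‖ ^ 2 ≤ ‖g x - g x'‖ ^ 2 := by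
  have h := hsm x x'
  have e : ⟪(g x - x) - (g x' - x'), x - x'⟫
      = ⟪g x - g x', x - x'⟫ - ‖x - x'‖ ^ 2 := by
    rw [show (g x - x) - (g x' - x') = (g x - g x') - (x - x') from by abel,
      inner_sub_left, real_inner_self_eq_norm_sq]
  rw [e] at h
  have e2 := norm_sub_sq_real (g x - g x') (x - x')
  nlinarith [sq_nonneg ‖g x - g x' - (x - x')‖]

private lemma rho_est (f g : H → H) (α β δ ρ : ℝ)
    (hsm : ∀ x x' : H, ⟪f x - f x', g x - g x'⟫ ≥ α * ‖x - x'‖ ^ 2)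
    (hflip : ∀ x x' : H, ‖f x - f x'‖ ≤ β * ‖x - x'‖)
    (hglip : ∀ x x' : H, ‖g x - g x'‖ ≤ δ * ‖x - x'‖)
    (hρ : 0 ≤ ρ) (hβ : 0 ≤ β) (hδ : 0 ≤ δ) (x x' : H) :
    ‖(g x - g x') - ρ • (f x - f x')‖ ^ 2
      ≤ (δ ^ 2 - 2 * ρ * α + ρ ^ 2 * β ^ 2) * ‖x - x'‖ ^ 2 := by
  have e1 : ‖(g x - g x') - ρ • (f x - f x')‖ ^ 2
      = ‖g x - g x'‖ ^ 2 - 2 * ρ * ⟪f x - f x', g x - g x'⟫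
        + ρ ^ 2 * ‖f x - f x'‖ ^ 2 := by
    rw [norm_sub_sq_real, real_inner_smul_right, norm_smul, real_inner_comm,
      mul_pow, Real.norm_eq_abs, sq_abs]
    ring
  have e2 : ‖g x - g x'‖ ^ 2 ≤ δ ^ 2 * ‖x - x'‖ ^ 2 := by
    nlinarith [hglip x x', norm_nonneg (g x - g x'), norm_nonneg (x - x')]
  have e3 : ‖f x - f x'‖ ^ 2 ≤ β ^ 2 * ‖x - x'‖ ^ 2 := by
    nlinarith [hflip x x', norm_nonneg (f x - f x'), norm_nonneg (x - x')]
  have e4 := hsm x x'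
  nlinarith [mul_le_mul_of_nonneg_left e4 hρ, mul_le_mul_of_nonneg_left e3 (sq_nonneg ρ)]

end aux

set_option maxHeartbeats 2000000 in
/-- Convergence of the projection iterative algorithm for the split general
variational inequality problem (Corollary 3.2). -/
theorem stmt_2
    {H₁ H₂ : Type*}
    [NormedAddCommGroup H₁] [InnerProductSpace ℝ H₁] [CompleteSpace H₁]
    [NormedAddCommGroup H₂] [InnerProductSpace ℝ H₂] [CompleteSpace H₂]
    -- fixed nonempty closed convex sets and their metric projections
    (C₁ : Set H₁) (C₂ : Set H₂)
    (hC₁ : C₁.Nonempty ∧ IsClosed C₁ ∧ Convex ℝ C₁)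
    (hC₂ : C₂.Nonempty ∧ IsClosed C₂ ∧ Convex ℝ C₂)
    (P₁ : H₁ → H₁) (P₂ : H₂ → H₂)
    (hP₁mem : ∀ z, P₁ z ∈ C₁)
    (hP₁char : ∀ z, ∀ y ∈ C₁, ⟪z - P₁ z, y - P₁ z⟫ ≤ 0)
    (hP₂mem : ∀ z, P₂ z ∈ C₂)
    (hP₂char : ∀ z, ∀ y ∈ C₂, ⟪z - P₂ z, y - P₂ z⟫ ≤ 0)
    -- the mappings and their properties
    (f₁ g₁ : H₁ → H₁) (f₂ g₂ : H₂ → H₂)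
    (α₁ α₂ β₁ β₂ δ₁ δ₂ σ₁ σ₂ : ℝ)
    (hf₁sm : ∀ x x' : H₁, ⟪f₁ x - f₁ x', g₁ x - g₁ x'⟫ ≥ α₁ * ‖x - x'‖ ^ 2)
    (hf₁lip : ∀ x x' : H₁, ‖f₁ x - f₁ x'‖ ≤ β₁ * ‖x - x'‖)
    (hg₁lip : ∀ x x' : H₁, ‖g₁ x - g₁ x'‖ ≤ δ₁ * ‖x - x'‖)
    (hg₁sm : ∀ x x' : H₁, ⟪(g₁ x - x) - (g₁ x' - x'), x - x'⟫ ≥ σ₁ * ‖x - x'‖ ^ 2)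
    (hf₂sm : ∀ x x' : H₂, ⟪f₂ x - f₂ x', g₂ x - g₂ x'⟫ ≥ α₂ * ‖x - x'‖ ^ 2)
    (hf₂lip : ∀ x x' : H₂, ‖f₂ x - f₂ x'‖ ≤ β₂ * ‖x - x'‖)
    (hg₂lip : ∀ x x' : H₂, ‖g₂ x - g₂ x'‖ ≤ δ₂ * ‖x - x'‖)
    (hg₂sm : ∀ x x' : H₂, ⟪(g₂ x - x) - (g₂ x' - x'), x - x'⟫ ≥ σ₂ * ‖x - x'‖ ^ 2)
    (A : H₁ →L[ℝ] H₂)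
    -- x₁* solves the SpGVIP
    (xs : H₁)
    (hsol₁mem : g₁ xs ∈ C₁)
    (hsol₁ : ∀ x ∈ C₁, ⟪f₁ xs, x - g₁ xs⟫ ≥ 0)
    (hsol₂mem : g₂ (A xs) ∈ C₂)
    (hsol₂ : ∀ x ∈ C₂, ⟪f₂ (A xs), x - g₂ (A xs)⟫ ≥ 0)
    -- the iterative algorithm 2.3
    (a : ℕ → ℝ) (ha : ∀ n, a n ∈ Set.Ioo (0 : ℝ) 1) (hadiv : ¬ Summable a)
    (ρ₁ ρ₂ γ : ℝ)
    (x₁ y : ℕ → H₁) (z : ℕ → H₂)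
    (halg₁ : ∀ n, g₁ (y n) = P₁ (g₁ (x₁ n) - ρ₁ • f₁ (x₁ n)))
    (halg₂ : ∀ n, g₂ (z n) = P₂ (g₂ (A (y n)) - ρ₂ • f₂ (A (y n))))
    (halg₃ : ∀ n, x₁ (n + 1) = (1 - a n) • x₁ n
        + a n • (y n + γ • (ContinuousLinearMap.adjoint A) (z n - A (y n))))
    -- conditions on the parameters
    (θ₂ k₁ : ℝ)
    (hθ₂def : θ₂ = Real.sqrt ((δ₂ ^ 2 - 2 * ρ₂ * α₂ + ρ₂ ^ 2 * β₂ ^ 2) / (2 * σ₂ + 1)))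
    (hk₁def : k₁ = Real.sqrt (2 * σ₁ + 1) / (1 + 2 * θ₂))
    (hρ₂ : 0 < ρ₂)
    (hγ : γ ∈ Set.Ioo (0 : ℝ) (2 / ‖A‖ ^ 2))
    (hθ₂pos : 0 < θ₂)
    (hδ₁ : δ₁ > |k₁|)
    (hα₁ : α₁ > β₁ * Real.sqrt (δ₁ ^ 2 - k₁ ^ 2))
    (hρ₁ : |ρ₁ - α₁ / β₁ ^ 2|
        < Real.sqrt (α₁ ^ 2 - β₁ ^ 2 * (δ₁ ^ 2 - k₁ ^ 2)) / β₁ ^ 2) :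
    Tendsto x₁ atTop (nhds xs) := by
  rcases subsingleton_or_nontrivial H₁ with hH | hH
  · have hx : x₁ = fun _ => xs := funext fun n => Subsingleton.elim _ _
    rw [hx]; exact tendsto_const_nhds
  obtain ⟨u, v, huv⟩ := exists_pair_ne H₁
  have hd : (0:ℝ) < ‖u - v‖ := norm_sub_pos_iff.mpr huv
  have hθ₂' : (0:ℝ) < 1 + 2 * θ₂ := by linarith
  -- basic positivity facts in H₁
  have hβ₁0 : 0 ≤ β₁ := by nlinarith [(norm_nonneg (f₁ u - f₁ v)).trans (hf₁lip u v), hd]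
  have hβ₁pos : 0 < β₁ := by
    rcases hβ₁0.eq_or_lt with h | h
    · exfalso
      rw [← h] at hρ₁
      norm_num at hρ₁
      exact (abs_nonneg _).not_gt hρ₁
    · exact h
  have hb2 : (0:ℝ) < β₁ ^ 2 := by positivity
  have hδ₁pos : 0 < δ₁ := lt_of_le_of_lt (abs_nonneg k₁) hδ₁
  have hk₁0 : 0 ≤ k₁ := by
    rw [hk₁def]; exact div_nonneg (Real.sqrt_nonneg _) hθ₂'.le
  have hk₁sq_lt : k₁ ^ 2 < δ₁ ^ 2 := by nlinarith [abs_nonneg k₁, sq_abs k₁]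
  have hα₁pos : 0 < α₁ :=
    lt_of_le_of_lt (mul_nonneg hβ₁0 (Real.sqrt_nonneg _)) hα₁
  have hX : β₁ ^ 2 * (δ₁ ^ 2 - k₁ ^ 2) < α₁ ^ 2 := by
    nlinarith [Real.sq_sqrt (show (0:ℝ) ≤ δ₁ ^ 2 - k₁ ^ 2 by linarith),
      Real.sqrt_nonneg (δ₁ ^ 2 - k₁ ^ 2),
      mul_self_lt_mul_self (mul_nonneg hβ₁0 (Real.sqrt_nonneg (δ₁ ^ 2 - k₁ ^ 2))) hα₁]
  have hssq : (Real.sqrt (α₁ ^ 2 - β₁ ^ 2 * (δ₁ ^ 2 - k₁ ^ 2))) ^ 2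
      = α₁ ^ 2 - β₁ ^ 2 * (δ₁ ^ 2 - k₁ ^ 2) := Real.sq_sqrt (by linarith)
  have hslt : Real.sqrt (α₁ ^ 2 - β₁ ^ 2 * (δ₁ ^ 2 - k₁ ^ 2)) < α₁ := by
    rw [Real.sqrt_lt' hα₁pos]
    nlinarith
  have habs : |ρ₁ * β₁ ^ 2 - α₁| < Real.sqrt (α₁ ^ 2 - β₁ ^ 2 * (δ₁ ^ 2 - k₁ ^ 2)) := by
    have h := mul_lt_mul_of_pos_right hρ₁ hb2
    rw [div_mul_cancel₀ _ (ne_of_gt hb2)] at h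
    have e : |ρ₁ - α₁ / β₁ ^ 2| * β₁ ^ 2 = |ρ₁ * β₁ ^ 2 - α₁| := by
      rw [show ρ₁ * β₁ ^ 2 - α₁ = (ρ₁ - α₁ / β₁ ^ 2) * β₁ ^ 2 from by field_simp,
        abs_mul, abs_of_pos hb2]
    rw [e] at h
    exact h
  have hρ₁pos : 0 < ρ₁ := by
    have h1 := (abs_lt.mp habs).1
    nlinarith
  have hsqlt : (ρ₁ * β₁ ^ 2 - α₁) ^ 2
      < Real.sqrt (α₁ ^ 2 - β₁ ^ 2 * (δ₁ ^ 2 - k₁ ^ 2)) ^ 2 := by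
    have h := pow_lt_pow_left₀ habs (abs_nonneg _) two_ne_zero
    rwa [sq_abs] at h
  have hT1lt : δ₁ ^ 2 - 2 * ρ₁ * α₁ + ρ₁ ^ 2 * β₁ ^ 2 < k₁ ^ 2 := by
    nlinarith [hssq, hsqlt]
  have hα₁le : α₁ ≤ β₁ * δ₁ := by
    nlinarith [hf₁sm u v, real_inner_le_norm (f₁ u - f₁ v) (g₁ u - g₁ v),
      mul_le_mul (hf₁lip u v) (hg₁lip u v) (norm_nonneg _)
        (mul_nonneg hβ₁0 (norm_nonneg _)),
      norm_nonneg (f₁ u - f₁ v), norm_nonneg (g₁ u - g₁ v), hd, pow_pos hd 2]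
  have hT1nonneg : 0 ≤ δ₁ ^ 2 - 2 * ρ₁ * α₁ + ρ₁ ^ 2 * β₁ ^ 2 := by
    nlinarith [sq_nonneg (δ₁ - ρ₁ * β₁)]
  have hσ₁pos : 0 < 2 * σ₁ + 1 := by
    by_contra h
    push_neg at h
    have h0 : Real.sqrt (2 * σ₁ + 1) = 0 := Real.sqrt_eq_zero'.mpr h
    have hk : k₁ = 0 := by rw [hk₁def, h0, zero_div]
    rw [hk] at hT1lt
    nlinarith
  -- θ₁
  set θ₁ : ℝ := Real.sqrt ((δ₁ ^ 2 - 2 * ρ₁ * α₁ + ρ₁ ^ 2 * β₁ ^ 2) / (2 * σ₁ + 1))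
    with hθ₁def
  have hθ₁0 : 0 ≤ θ₁ := Real.sqrt_nonneg _
  have hθ₁sq : θ₁ ^ 2 = (δ₁ ^ 2 - 2 * ρ₁ * α₁ + ρ₁ ^ 2 * β₁ ^ 2) / (2 * σ₁ + 1) := by
    rw [hθ₁def]; exact Real.sq_sqrt (div_nonneg hT1nonneg hσ₁pos.le)
  have hk₁sq : k₁ ^ 2 = (2 * σ₁ + 1) / (1 + 2 * θ₂) ^ 2 := by
    rw [hk₁def, div_pow, Real.sq_sqrt hσ₁pos.le]
  have hθ₁lt : (1 + 2 * θ₂) * θ₁ < 1 := by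
    have h1 : θ₁ < 1 / (1 + 2 * θ₂) := by
      rw [hθ₁def, Real.sqrt_lt' (by positivity), div_pow, one_pow,
        div_lt_div_iff₀ hσ₁pos (by positivity)]
      rw [hk₁sq] at hT1lt
      have h := mul_lt_mul_of_pos_right hT1lt (show (0:ℝ) < (1 + 2 * θ₂) ^ 2 by positivity)
      rw [div_mul_cancel₀ _ (show ((1 + 2 * θ₂) ^ 2 : ℝ) ≠ 0 by positivity)] at h
      linarith
    rw [lt_div_iff₀ (by positivity)] at h1
    linarith [mul_comm θ₁ (1 + 2 * θ₂)]
  -- fixed point property for the solution in H₁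
  have hfix₁ : P₁ (g₁ xs - ρ₁ • f₁ xs) = g₁ xs := by
    apply proj_fixed P₁ hP₁mem hP₁char hsol₁mem
    intro yy hy
    rw [show g₁ xs - ρ₁ • f₁ xs - g₁ xs = -(ρ₁ • f₁ xs) from by abel,
      inner_neg_left, real_inner_smul_left]
    have := hsol₁ yy hy
    nlinarith
  -- estimate for y
  have hyest : ∀ n, ‖y n - xs‖ ≤ θ₁ * ‖x₁ n - xs‖ := by
    intro n
    have h1 : ‖g₁ (y n) - g₁ xs‖
        ≤ ‖(g₁ (x₁ n) - g₁ xs) - ρ₁ • (f₁ (x₁ n) - f₁ xs)‖ := by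
      have h := proj_nonexp P₁ hP₁mem hP₁char (g₁ (x₁ n) - ρ₁ • f₁ (x₁ n))
        (g₁ xs - ρ₁ • f₁ xs)
      have e : (g₁ (x₁ n) - ρ₁ • f₁ (x₁ n)) - (g₁ xs - ρ₁ • f₁ xs)
          = (g₁ (x₁ n) - g₁ xs) - ρ₁ • (f₁ (x₁ n) - f₁ xs) := by
        rw [smul_sub]; abel
      rw [e, hfix₁, ← halg₁ n] at h
      exact h
    have h2 := rho_est f₁ g₁ α₁ β₁ δ₁ ρ₁ hf₁sm hf₁lip hg₁lip hρ₁pos.le hβ₁pos.le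
      hδ₁pos.le (x₁ n) xs
    have h3 := exp_est g₁ σ₁ hg₁sm (y n) xs
    have h4 : (2 * σ₁ + 1) * ‖y n - xs‖ ^ 2
        ≤ (δ₁ ^ 2 - 2 * ρ₁ * α₁ + ρ₁ ^ 2 * β₁ ^ 2) * ‖x₁ n - xs‖ ^ 2 := by
      have h1' := pow_le_pow_left₀ (norm_nonneg _) h1 2
      linarith [h1', h2, h3]
    apply sqle (norm_nonneg _) (mul_nonneg hθ₁0 (norm_nonneg _))
    rw [mul_pow, hθ₁sq, div_mul_eq_mul_div, le_div_iff₀ hσ₁pos]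
    linarith
  -- estimate for z
  have hzest : ∀ n, ‖z n - A xs‖ ≤ θ₂ * ‖A (y n) - A xs‖ := by
    rcases subsingleton_or_nontrivial H₂ with hH2 | hH2
    · intro n
      rw [Subsingleton.elim (z n) (A xs), Subsingleton.elim (A (y n)) (A xs),
        sub_self, norm_zero, mul_zero]
    · obtain ⟨u₂, v₂, huv₂⟩ := exists_pair_ne H₂
      have hd₂ : (0:ℝ) < ‖u₂ - v₂‖ := norm_sub_pos_iff.mpr huv₂
      have hβ₂0 : 0 ≤ β₂ := by
        nlinarith [(norm_nonneg (f₂ u₂ - f₂ v₂)).trans (hf₂lip u₂ v₂), hd₂]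
      have hδ₂0 : 0 ≤ δ₂ := by
        nlinarith [(norm_nonneg (g₂ u₂ - g₂ v₂)).trans (hg₂lip u₂ v₂), hd₂]
      have hα₂le : α₂ ≤ β₂ * δ₂ := by
        nlinarith [hf₂sm u₂ v₂, real_inner_le_norm (f₂ u₂ - f₂ v₂) (g₂ u₂ - g₂ v₂),
          mul_le_mul (hf₂lip u₂ v₂) (hg₂lip u₂ v₂) (norm_nonneg _)
            (mul_nonneg hβ₂0 (norm_nonneg _)),
          norm_nonneg (f₂ u₂ - f₂ v₂), norm_nonneg (g₂ u₂ - g₂ v₂), hd₂, pow_pos hd₂ 2]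
      have hT₂nonneg : 0 ≤ δ₂ ^ 2 - 2 * ρ₂ * α₂ + ρ₂ ^ 2 * β₂ ^ 2 := by
        nlinarith [sq_nonneg (δ₂ - ρ₂ * β₂)]
      have hσ₂pos : 0 < 2 * σ₂ + 1 := by
        by_contra h
        push_neg at h
        have h0 : (δ₂ ^ 2 - 2 * ρ₂ * α₂ + ρ₂ ^ 2 * β₂ ^ 2) / (2 * σ₂ + 1) ≤ 0 := by
          rcases h.lt_or_eq with h' | h'
          · exact div_nonpos_iff.mpr (Or.inl ⟨hT₂nonneg, h'.le⟩)
          · rw [h', div_zero]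
        have : θ₂ = 0 := by rw [hθ₂def]; exact Real.sqrt_eq_zero'.mpr h0
        linarith
      have hθ₂sq : θ₂ ^ 2 = (δ₂ ^ 2 - 2 * ρ₂ * α₂ + ρ₂ ^ 2 * β₂ ^ 2) / (2 * σ₂ + 1) := by
        rw [hθ₂def]; exact Real.sq_sqrt (div_nonneg hT₂nonneg hσ₂pos.le)
      have hfix₂ : P₂ (g₂ (A xs) - ρ₂ • f₂ (A xs)) = g₂ (A xs) := by
        apply proj_fixed P₂ hP₂mem hP₂char hsol₂mem
        intro yy hy
        rw [show g₂ (A xs) - ρ₂ • f₂ (A xs) - g₂ (A xs) = -(ρ₂ • f₂ (A xs)) from by abel,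
          inner_neg_left, real_inner_smul_left]
        have := hsol₂ yy hy
        nlinarith
      intro n
      have h1 : ‖g₂ (z n) - g₂ (A xs)‖
          ≤ ‖(g₂ (A (y n)) - g₂ (A xs)) - ρ₂ • (f₂ (A (y n)) - f₂ (A xs))‖ := by
        have h := proj_nonexp P₂ hP₂mem hP₂char (g₂ (A (y n)) - ρ₂ • f₂ (A (y n)))
          (g₂ (A xs) - ρ₂ • f₂ (A xs))
        have e : (g₂ (A (y n)) - ρ₂ • f₂ (A (y n))) - (g₂ (A xs) - ρ₂ • f₂ (A xs))
            = (g₂ (A (y n)) - g₂ (A xs)) - ρ₂ • (f₂ (A (y n)) - f₂ (A xs)) := by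
          rw [smul_sub]; abel
        rw [e, hfix₂, ← halg₂ n] at h
        exact h
      have h2 := rho_est f₂ g₂ α₂ β₂ δ₂ ρ₂ hf₂sm hf₂lip hg₂lip hρ₂.le hβ₂0 hδ₂0
        (A (y n)) (A xs)
      have h3 := exp_est g₂ σ₂ hg₂sm (z n) (A xs)
      have h4 : (2 * σ₂ + 1) * ‖z n - A xs‖ ^ 2
          ≤ (δ₂ ^ 2 - 2 * ρ₂ * α₂ + ρ₂ ^ 2 * β₂ ^ 2) * ‖A (y n) - A xs‖ ^ 2 := by
        have h1' := pow_le_pow_left₀ (norm_nonneg _) h1 2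
        linarith [h1', h2, h3]
      apply sqle (norm_nonneg _) (mul_nonneg hθ₂pos.le (norm_nonneg _))
      rw [mul_pow, hθ₂sq, div_mul_eq_mul_div, le_div_iff₀ hσ₂pos]
      linarith
  -- operator norm facts
  obtain ⟨hγ0, hγ2⟩ := hγ
  have hAnorm : γ * ‖A‖ ^ 2 < 2 := by
    by_cases hA : ‖A‖ = 0
    · rw [hA]; norm_num
    · have hA2 : (0:ℝ) < ‖A‖ ^ 2 := by
        have : 0 < ‖A‖ := (norm_nonneg A).lt_of_ne (Ne.symm hA)
        positivity
      rw [lt_div_iff₀ hA2] at hγ2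
      exact hγ2
  have hadj : ∀ w : H₂, ‖(ContinuousLinearMap.adjoint A) w‖ ≤ ‖A‖ * ‖w‖ := by
    intro w
    calc ‖(ContinuousLinearMap.adjoint A) w‖
        ≤ ‖ContinuousLinearMap.adjoint A‖ * ‖w‖ := ContinuousLinearMap.le_opNorm _ _
      _ = ‖A‖ * ‖w‖ := by
          rw [LinearIsometryEquiv.norm_map ContinuousLinearMap.adjoint A]
  -- estimate for the combined step
  have huest : ∀ n, ‖(y n + γ • (ContinuousLinearMap.adjoint A) (z n - A (y n))) - xs‖
      ≤ (1 + 2 * θ₂) * ‖y n - xs‖ := by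
    intro n
    have hrw : (y n + γ • (ContinuousLinearMap.adjoint A) (z n - A (y n))) - xs
        = (y n - xs) + γ • (ContinuousLinearMap.adjoint A) (z n - A (y n)) := by abel
    rw [hrw]
    have e0 := norm_add_sq_real (y n - xs)
      (γ • (ContinuousLinearMap.adjoint A) (z n - A (y n)))
    have e1 : ⟪y n - xs, γ • (ContinuousLinearMap.adjoint A) (z n - A (y n))⟫
        = γ * ⟪A (y n - xs), z n - A (y n)⟫ := by
      rw [real_inner_smul_right, ContinuousLinearMap.adjoint_inner_right]
    have e2 : A (y n - xs) = A (y n) - A xs := by rw [map_sub]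
    have e2' : A (y n) - A xs = (z n - A xs) - (z n - A (y n)) := by abel
    have hW : ‖z n - A (y n)‖ ≤ (1 + θ₂) * ‖A (y n) - A xs‖ := by
      have hw' : z n - A (y n) = (z n - A xs) - (A (y n) - A xs) := by abel
      calc ‖z n - A (y n)‖ = ‖(z n - A xs) - (A (y n) - A xs)‖ := by rw [← hw']
        _ ≤ ‖z n - A xs‖ + ‖A (y n) - A xs‖ := norm_sub_le _ _
        _ ≤ θ₂ * ‖A (y n) - A xs‖ + ‖A (y n) - A xs‖ := by linarith [hzest n]
        _ = (1 + θ₂) * ‖A (y n) - A xs‖ := by ring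
    have hq : ‖A (y n) - A xs‖ ≤ ‖A‖ * ‖y n - xs‖ := by
      rw [← e2]; exact ContinuousLinearMap.le_opNorm A _
    have hip : ⟪A (y n - xs), z n - A (y n)⟫
        ≤ θ₂ * ‖A (y n) - A xs‖ * ‖z n - A (y n)‖ - ‖z n - A (y n)‖ ^ 2 := by
      have eip : ⟪A (y n - xs), z n - A (y n)⟫
          = ⟪z n - A xs, z n - A (y n)⟫ - ‖z n - A (y n)‖ ^ 2 := by
        rw [e2, e2', inner_sub_left, real_inner_self_eq_norm_sq]
      rw [eip]
      have hcs := real_inner_le_norm (z n - A xs) (z n - A (y n))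
      have hz := mul_le_mul_of_nonneg_right (hzest n) (norm_nonneg (z n - A (y n)))
      linarith
    have h5 : ‖γ • (ContinuousLinearMap.adjoint A) (z n - A (y n))‖ ^ 2
        ≤ γ ^ 2 * ‖A‖ ^ 2 * ‖z n - A (y n)‖ ^ 2 := by
      rw [norm_smul, Real.norm_eq_abs, mul_pow, sq_abs]
      have h := mul_le_mul_of_nonneg_left
        (pow_le_pow_left₀ (norm_nonneg _) (hadj (z n - A (y n))) 2) (sq_nonneg γ)
      calc γ ^ 2 * ‖(ContinuousLinearMap.adjoint A) (z n - A (y n))‖ ^ 2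
          ≤ γ ^ 2 * (‖A‖ * ‖z n - A (y n)‖) ^ 2 := h
        _ = γ ^ 2 * ‖A‖ ^ 2 * ‖z n - A (y n)‖ ^ 2 := by ring
    apply sqle (norm_nonneg _) (mul_nonneg (by linarith) (norm_nonneg _))
    rw [e0, e1]
    have A1 := mul_le_mul_of_nonneg_left hip hγ0.le
    have A2 : γ ^ 2 * ‖A‖ ^ 2 * ‖z n - A (y n)‖ ^ 2 ≤ 2 * γ * ‖z n - A (y n)‖ ^ 2 := by
      have h := mul_le_mul_of_nonneg_right hAnorm.le
        (mul_nonneg hγ0.le (sq_nonneg ‖z n - A (y n)‖))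
      linarith [h, sq_nonneg ‖z n - A (y n)‖]
    have A3 := mul_le_mul_of_nonneg_left hW
      (mul_nonneg (mul_nonneg hγ0.le hθ₂pos.le) (norm_nonneg (A (y n) - A xs)))
    have A4 : ‖A (y n) - A xs‖ ^ 2 ≤ ‖A‖ ^ 2 * ‖y n - xs‖ ^ 2 := by
      have h := pow_le_pow_left₀ (norm_nonneg _) hq 2
      calc ‖A (y n) - A xs‖ ^ 2 ≤ (‖A‖ * ‖y n - xs‖) ^ 2 := h
        _ = ‖A‖ ^ 2 * ‖y n - xs‖ ^ 2 := by ring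
    have A5 : γ * θ₂ * (1 + θ₂) * (‖A‖ ^ 2 * ‖y n - xs‖ ^ 2)
        ≤ 2 * θ₂ * (1 + θ₂) * ‖y n - xs‖ ^ 2 := by
      have h := mul_le_mul_of_nonneg_right hAnorm.le
        (mul_nonneg (mul_nonneg hθ₂pos.le (by linarith : (0:ℝ) ≤ 1 + θ₂))
          (sq_nonneg ‖y n - xs‖))
      linarith [h]
    have A4' := mul_le_mul_of_nonneg_left A4
      (mul_nonneg (mul_nonneg hγ0.le hθ₂pos.le) (by linarith : (0:ℝ) ≤ 1 + θ₂))
    linarith [h5, A1, A2, A3, A4', A5]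
  -- the recursion
  have hrec : ∀ n, ‖x₁ (n + 1) - xs‖
      ≤ (1 - (1 - (1 + 2 * θ₂) * θ₁) * a n) * ‖x₁ n - xs‖ := by
    intro n
    have hdcomp : x₁ (n + 1) - xs = (1 - a n) • (x₁ n - xs)
        + a n • ((y n + γ • (ContinuousLinearMap.adjoint A) (z n - A (y n))) - xs) := by
      rw [halg₃ n]
      module
    rw [hdcomp]
    have han := ha n
    have h6 : ‖(1 - a n) • (x₁ n - xs)
        + a n • ((y n + γ • (ContinuousLinearMap.adjoint A) (z n - A (y n))) - xs)‖
        ≤ (1 - a n) * ‖x₁ n - xs‖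
          + a n * ‖(y n + γ • (ContinuousLinearMap.adjoint A) (z n - A (y n))) - xs‖ := by
      calc _ ≤ ‖(1 - a n) • (x₁ n - xs)‖
          + ‖a n • ((y n + γ • (ContinuousLinearMap.adjoint A) (z n - A (y n))) - xs)‖ :=
          norm_add_le _ _
        _ = _ := by
          rw [norm_smul, norm_smul, Real.norm_eq_abs, Real.norm_eq_abs,
            abs_of_nonneg (by linarith [han.2] : (0:ℝ) ≤ 1 - a n),
            abs_of_pos han.1]
    have h7 : ‖(y n + γ • (ContinuousLinearMap.adjoint A) (z n - A (y n))) - xs‖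
        ≤ (1 + 2 * θ₂) * (θ₁ * ‖x₁ n - xs‖) :=
      (huest n).trans (mul_le_mul_of_nonneg_left (hyest n) (by linarith))
    have h8 := mul_le_mul_of_nonneg_left h7 han.1.le
    calc _ ≤ (1 - a n) * ‖x₁ n - xs‖
        + a n * ‖(y n + γ • (ContinuousLinearMap.adjoint A) (z n - A (y n))) - xs‖ := h6
      _ ≤ (1 - a n) * ‖x₁ n - xs‖ + a n * ((1 + 2 * θ₂) * (θ₁ * ‖x₁ n - xs‖)) := by
          linarith
      _ = (1 - (1 - (1 + 2 * θ₂) * θ₁) * a n) * ‖x₁ n - xs‖ := by ring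
  -- conclude
  set L : ℝ := (1 + 2 * θ₂) * θ₁ with hLdef
  have hL0 : 0 ≤ L := mul_nonneg hθ₂'.le hθ₁0
  have hc : 0 < 1 - L := by
    have := hθ₁lt
    linarith
  set S : ℕ → ℝ := fun n => ∑ k ∈ Finset.range n, a k with hSdef
  have hmono : ∀ n, ‖x₁ n - xs‖ ≤ ‖x₁ 0 - xs‖ * Real.exp (-(1 - L) * S n) := by
    intro n
    induction n with
    | zero => simp [hSdef]
    | succ n ih =>
      have h1 : (0:ℝ) ≤ 1 - (1 - L) * a n := by
        nlinarith [(ha n).1, (ha n).2, hL0]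
      have h2 : 1 - (1 - L) * a n ≤ Real.exp (-(1 - L) * a n) := by
        have := Real.add_one_le_exp (-(1 - L) * a n)
        linarith
      have hSsucc : S (n + 1) = S n + a n := Finset.sum_range_succ a n
      calc ‖x₁ (n + 1) - xs‖ ≤ (1 - (1 - L) * a n) * ‖x₁ n - xs‖ := hrec n
        _ ≤ Real.exp (-(1 - L) * a n) * (‖x₁ 0 - xs‖ * Real.exp (-(1 - L) * S n)) :=
          mul_le_mul h2 ih (norm_nonneg _) (Real.exp_nonneg _)
        _ = ‖x₁ 0 - xs‖ * Real.exp (-(1 - L) * S (n + 1)) := by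
          rw [hSsucc, show (-(1 - L) * (S n + a n)) = -(1 - L) * a n + -(1 - L) * S n
            from by ring, Real.exp_add]
          ring
  have hS : Tendsto S atTop atTop :=
    (not_summable_iff_tendsto_nat_atTop_of_nonneg (fun n => (ha n).1.le)).mp hadiv
  have hexp : Tendsto (fun n => ‖x₁ 0 - xs‖ * Real.exp (-(1 - L) * S n)) atTop (nhds 0) := by
    rw [show (0:ℝ) = ‖x₁ 0 - xs‖ * 0 from by ring]
    apply Tendsto.const_mul
    have h' : Tendsto (fun n => (1 - L) * S n) atTop atTop :=
      hS.const_mul_atTop hc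
    have h'' : Tendsto (fun n => -(1 - L) * S n) atTop atBot := by
      simp only [neg_mul]
      exact tendsto_neg_atBot_iff.mpr h'
    exact Real.tendsto_exp_atBot.comp h''
  have h0 : Tendsto (fun n => ‖x₁ n - xs‖) atTop (nhds 0) :=
    squeeze_zero (fun n => norm_nonneg _) hmono hexp
  exact tendsto_iff_norm_sub_tendsto_zero.mpr h0
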